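/- Let (X, d) be a complete separable metric space, γ : ℝ₊ → ℝ₊ lower semicontinuous with γ(0) = 0 and γ(u+v) ≤ C(γ(u)+γ(v)), and let μ be a Borel probability measure with ∫ γ(d(x, x₀)) dμ(x) < ∞. Then for every measurable function ψ : X → ℝ that is bounded above by some continuous function φ with |φ(x)| ≤ a + b γ(d(x, x₀)), one has sup over probability measures ν with ∫ γ(d(x,x₀)) dν < ∞ of (∫ ψ dν − H(ν|μ)) = log ∫ e^ψ dμ, where H(ν|μ) is the relative entropy. -/

import Mathlib

open MeasureTheory
open scoped ENNReal

section Aux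

variable {Y : Type*} [MeasurableSpace Y]

/-- Nonnegativity of relative entropy. -/
lemma aux_integral_llr_nonneg (ν μ : Measure Y) [IsProbabilityMeasure ν] [IsProbabilityMeasure μ]
    (hac : ν ≪ μ) (hint : Integrable (llr ν μ) ν) : 0 ≤ ∫ x, llr ν μ x ∂ν := by
  have hexp : (fun x ↦ Real.exp (- llr ν μ x)) =ᵐ[ν] fun x ↦ (μ.rnDeriv ν x).toReal :=
    exp_neg_llr hac
  have hint2 : Integrable (fun x ↦ (μ.rnDeriv ν x).toReal) ν :=
    Measure.integrable_toReal_rnDeriv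
  have h1 : ∫ x, - llr ν μ x ∂ν ≤ ∫ x, ((μ.rnDeriv ν x).toReal - 1) ∂ν := by
    refine integral_mono_ae hint.neg (hint2.sub (integrable_const 1)) ?_
    filter_upwards [hexp] with x hx
    have h := Real.add_one_le_exp (- llr ν μ x)
    rw [hx] at h
    linarith
  rw [integral_neg, integral_sub hint2 (integrable_const 1)] at h1
  simp only [integral_const, measure_univ, ENNReal.toReal_one, probReal_univ, smul_eq_mul, one_mul] at h1
  have h2 : ∫ x, (μ.rnDeriv ν x).toReal ∂ν ≤ 1 := by
    rw [Measure.integral_toReal_rnDeriv']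
    have h3 : (0:ℝ) ≤ (μ.singularPart ν Set.univ).toReal := ENNReal.toReal_nonneg
    simp only [measure_univ, ENNReal.toReal_one, measureReal_def]
    linarith
  linarith

end Aux

/-- Donsker–Varadhan variational formula: On a Polish space `X`,
for a probability measure `μ` with finite `γ`-moment and a measurable `ψ`
bounded above by a function `φ` of growth `a + b γ(d(·,x₀))`, one has
`sup_ν (∫ ψ dν − H(ν|μ)) = log ∫ e^ψ dμ`, the supremum being over probability
measures `ν` with finite `γ`-moment (restricted to those with finite entropy
and `ψ` integrable, on which the supremum is effectively taken), the equality
holding in the extended reals. -/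
theorem stmt_5 {X : Type*} [MetricSpace X] [CompleteSpace X]
    [TopologicalSpace.SeparableSpace X] [MeasurableSpace X] [BorelSpace X]
    (γ : ℝ → ℝ) (hγnonneg : ∀ u, 0 ≤ u → 0 ≤ γ u) (hγ0 : γ 0 = 0)
    (hγlsc : LowerSemicontinuous γ)
    (C : ℝ) (hγsub : ∀ u v : ℝ, 0 ≤ u → 0 ≤ v → γ (u + v) ≤ C * (γ u + γ v))
    (x₀ : X) (μ : Measure X) [IsProbabilityMeasure μ]
    (hμmom : Integrable (fun x => γ (dist x x₀)) μ)
    (ψ : X → ℝ) (hψmeas : Measurable ψ)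
    (φ : X → ℝ) (hφcont : Continuous φ) (a b : ℝ) (ha : 0 ≤ a) (hb : 0 ≤ b)
    (hφgrowth : ∀ x, |φ x| ≤ a + b * γ (dist x x₀))
    (hψφ : ∀ x, ψ x ≤ φ x) :
    sSup {r : EReal | ∃ ν : Measure X, IsProbabilityMeasure ν ∧
        Integrable (fun x => γ (dist x x₀)) ν ∧ ν ≪ μ ∧
        Integrable (llr ν μ) ν ∧ Integrable ψ ν ∧
        r = ((∫ x, ψ x ∂ν - ∫ x, llr ν μ x ∂ν : ℝ) : EReal)} =
      ENNReal.log (∫⁻ x, ENNReal.ofReal (Real.exp (ψ x)) ∂μ) := by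
  have hγdist_meas : Measurable (fun x : X => γ (dist x x₀)) :=
    hγlsc.measurable.comp (continuous_id.dist continuous_const).measurable
  set S : Set EReal := {r : EReal | ∃ ν : Measure X, IsProbabilityMeasure ν ∧
        Integrable (fun x => γ (dist x x₀)) ν ∧ ν ≪ μ ∧
        Integrable (llr ν μ) ν ∧ Integrable ψ ν ∧
        r = ((∫ x, ψ x ∂ν - ∫ x, llr ν μ x ∂ν : ℝ) : EReal)} with hSdef
  set Z : ℝ≥0∞ := ∫⁻ x, ENNReal.ofReal (Real.exp (ψ x)) ∂μ with hZdef
  refine le_antisymm ?_ ?_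
  · -- upper bound
    refine sSup_le ?_
    rintro r ⟨ν, hνP, hγν, hac, hllr, hψν, rfl⟩
    haveI := hνP
    by_cases hZtop : Z = ∞
    · rw [hZtop]; simp
    have hψm : AEStronglyMeasurable (fun x => Real.exp (ψ x)) μ :=
      (Real.measurable_exp.comp hψmeas).aestronglyMeasurable
    have hexpint : Integrable (fun x => Real.exp (ψ x)) μ := by
      refine ⟨hψm, ?_⟩
      rw [hasFiniteIntegral_iff_ofReal (ae_of_all _ fun x => (Real.exp_pos _).le)]
      exact Ne.lt_top hZtop
    have hZpos : Z ≠ 0 := by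
      have : 0 < Z := by
        have hm : Measurable fun x => ENNReal.ofReal (Real.exp (ψ x)) := by fun_prop
        rw [hZdef, lintegral_pos_iff_support hm]
        have hsupp : Function.support (fun x => ENNReal.ofReal (Real.exp (ψ x))) = Set.univ := by
          ext x
          simp [Function.mem_support, ENNReal.ofReal_eq_zero, not_le, Real.exp_pos]
        rw [hsupp]
        simp
      exact this.ne'
    have hZeq : ∫ x, Real.exp (ψ x) ∂μ = Z.toReal := by
      rw [integral_eq_lintegral_of_nonneg_ae (ae_of_all _ fun x => (Real.exp_pos _).le) hψm]
    have hkey := integral_llr_tilted_right hac hψν hexpint hllr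
    have hact : ν ≪ μ.tilted ψ := hac.trans (absolutelyContinuous_tilted hexpint)
    haveI hPt : IsProbabilityMeasure (μ.tilted ψ) := isProbabilityMeasure_tilted hexpint
    have hintt : Integrable (llr ν (μ.tilted ψ)) ν :=
      integrable_llr_tilted_right hac hψν hllr hexpint
    have h0 : 0 ≤ ∫ x, llr ν (μ.tilted ψ) x ∂ν :=
      aux_integral_llr_nonneg ν (μ.tilted ψ) hact hintt
    rw [hkey] at h0
    rw [ENNReal.log_pos_real hZpos hZtop]
    have hle : ∫ x, ψ x ∂ν - ∫ x, llr ν μ x ∂ν ≤ Real.log Z.toReal := by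
      rw [← hZeq]; linarith
    exact_mod_cast hle
  · -- lower bound
    set g : ℕ → X → ℝ := fun n x => if -(n:ℝ) ≤ ψ x then Real.exp (min (ψ x) n) else 0 with hg
    have hgmeas : ∀ n, Measurable (g n) := fun n =>
      Measurable.ite (measurableSet_le measurable_const hψmeas)
        (Real.measurable_exp.comp (hψmeas.min measurable_const)) measurable_const
    have hgnonneg : ∀ n x, 0 ≤ g n x := by
      intro n x
      rw [hg]
      dsimp only
      split_ifs
      · exact (Real.exp_pos _).le
      · exact le_rfl
    have hgle : ∀ n x, g n x ≤ Real.exp (ψ x) := by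
      intro n x
      rw [hg]
      dsimp only
      split_ifs
      · exact Real.exp_le_exp.mpr (min_le_left _ _)
      · exact (Real.exp_pos _).le
    have hglen : ∀ n x, g n x ≤ Real.exp n := by
      intro n x
      rw [hg]
      dsimp only
      split_ifs
      · exact Real.exp_le_exp.mpr (min_le_right _ _)
      · exact (Real.exp_pos _).le
    set L : ℕ → ℝ≥0∞ := fun n => ∫⁻ x, ENNReal.ofReal (g n x) ∂μ with hLdef
    have hmono : Monotone (fun n => (fun x => ENNReal.ofReal (g n x))) := by
      intro n m hnm
      intro x
      apply ENNReal.ofReal_le_ofReal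
      by_cases h : -(n:ℝ) ≤ ψ x
      · have h' : -(m:ℝ) ≤ ψ x :=
          le_trans (neg_le_neg (Nat.cast_le.mpr hnm)) h
        rw [hg]
        dsimp only
        rw [if_pos h, if_pos h']
        exact Real.exp_le_exp.mpr (min_le_min le_rfl (Nat.cast_le.mpr hnm))
      · rw [hg]
        dsimp only
        rw [if_neg h]
        exact hgnonneg m x
    have hsup : ∀ x, (⨆ n, ENNReal.ofReal (g n x)) = ENNReal.ofReal (Real.exp (ψ x)) := by
      intro x
      apply le_antisymm
      · exact iSup_le fun n => ENNReal.ofReal_le_ofReal (hgle n x)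
      · obtain ⟨n, hn⟩ : ∃ n : ℕ, |ψ x| ≤ n := exists_nat_ge _
        have h1 : -(n:ℝ) ≤ ψ x := neg_le_of_abs_le hn
        have h2 : ψ x ≤ n := le_of_abs_le hn
        refine le_trans (le_of_eq ?_) (le_iSup (fun n => ENNReal.ofReal (g n x)) n)
        rw [hg]
        dsimp only
        rw [if_pos h1, min_eq_left h2]
    have hZsup : Z = ⨆ n, L n := by
      rw [hZdef, hLdef, ← lintegral_iSup (fun n => (hgmeas n).ennreal_ofReal) hmono]
      exact lintegral_congr fun x => (hsup x).symm
    have hlog : ∀ n, ENNReal.log (L n) ≤ sSup S := by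
      intro n
      by_cases hLn0 : L n = 0
      · rw [hLn0]
        simp
      have hLntop : L n ≠ ∞ := by
        refine (lt_of_le_of_lt ?_ (ENNReal.ofReal_lt_top : ENNReal.ofReal (Real.exp ↑n) < ∞)).ne
        calc L n ≤ ∫⁻ _, ENNReal.ofReal (Real.exp n) ∂μ :=
              lintegral_mono fun x => ENNReal.ofReal_le_ofReal (hglen n x)
          _ = ENNReal.ofReal (Real.exp n) := by simp
      set c : ℝ := (L n).toReal with hc
      have hcpos : 0 < c := ENNReal.toReal_pos hLn0 hLntop
      set d : X → ℝ≥0∞ := fun x => ENNReal.ofReal (g n x) / L n with hd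
      have hdmeas : Measurable d := (hgmeas n).ennreal_ofReal.div_const _
      set νn : Measure X := μ.withDensity d with hνn
      have hν_ac : νn ≪ μ := withDensity_absolutelyContinuous _ _
      haveI hνP : IsProbabilityMeasure νn := by
        constructor
        rw [hνn, withDensity_apply _ MeasurableSet.univ, setLIntegral_univ, hd]
        simp_rw [div_eq_mul_inv]
        rw [lintegral_mul_const _ (hgmeas n).ennreal_ofReal]
        exact ENNReal.mul_inv_cancel hLn0 hLntop
      have hν_le : νn ≤ (ENNReal.ofReal (Real.exp n) / L n) • μ := by
        rw [hνn, ← withDensity_const]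
        refine withDensity_mono (ae_of_all _ fun x => ?_)
        exact ENNReal.div_le_div_right (ENNReal.ofReal_le_ofReal (hglen n x)) _
      have hsmul_ne_top : (ENNReal.ofReal (Real.exp n) / L n) ≠ ∞ :=
        (ENNReal.div_lt_top ENNReal.ofReal_ne_top hLn0).ne
      have hmono_int : ∀ (h : X → ℝ), Integrable h μ → Integrable h νn := fun h hint =>
        (hint.smul_measure hsmul_ne_top).mono_measure hν_le
      have hγν : Integrable (fun x => γ (dist x x₀)) νn := hmono_int _ hμmom
      have hν_ae : ∀ᵐ x ∂νn, -(n:ℝ) ≤ ψ x := by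
        rw [ae_iff]
        have hms : MeasurableSet {x : X | ¬ -(n:ℝ) ≤ ψ x} :=
          (measurableSet_le measurable_const hψmeas).compl
        rw [hνn, withDensity_apply _ hms]
        have : ∀ x ∈ {x : X | ¬ -(n:ℝ) ≤ ψ x}, d x = 0 := by
          intro x hx
          rw [hd]
          dsimp only
          rw [hg]
          dsimp only
          rw [if_neg hx]
          simp
        rw [setLIntegral_congr_fun hms this]
        simp
      have hψν : Integrable ψ νn := by
        have habound : Integrable (fun x => a + b * γ (dist x x₀) + n) νn :=
          ((integrable_const a).add (hγν.const_mul b)).add (integrable_const _)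
        refine habound.mono' hψmeas.aestronglyMeasurable ?_
        filter_upwards [hν_ae] with x hx
        have hγd : 0 ≤ γ (dist x x₀) := hγnonneg _ dist_nonneg
        have hbγ : 0 ≤ b * γ (dist x x₀) := mul_nonneg hb hγd
        have hub : ψ x ≤ a + b * γ (dist x x₀) :=
          le_trans (hψφ x) (le_trans (le_abs_self _) (hφgrowth x))
        rw [Real.norm_eq_abs, abs_le]
        constructor
        · have hn0 : (0:ℝ) ≤ n := Nat.cast_nonneg n
          linarith
        · have hn0 : (0:ℝ) ≤ n := Nat.cast_nonneg n
          linarith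
      have hmin_int : Integrable (fun x => min (ψ x) n) νn := by
        have : Integrable (fun x => |ψ x| + n) νn := hψν.abs.add (integrable_const _)
        refine this.mono' (hψmeas.min measurable_const).aestronglyMeasurable ?_
        refine ae_of_all _ fun x => ?_
        rw [Real.norm_eq_abs]
        rcases min_cases (ψ x) (n:ℝ) with ⟨heq, _⟩ | ⟨heq, _⟩ <;> rw [heq]
        · have hn0 : (0:ℝ) ≤ n := Nat.cast_nonneg n
          linarith [le_abs_self (ψ x), neg_abs_le (ψ x), abs_nonneg (ψ x)]
        · rw [abs_of_nonneg (Nat.cast_nonneg n : (0:ℝ) ≤ n)]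
          linarith [abs_nonneg (ψ x)]
      have hrn : νn.rnDeriv μ =ᵐ[μ] d := Measure.rnDeriv_withDensity μ hdmeas
      have hllr_eq : llr νn μ =ᵐ[νn] fun x => min (ψ x) n - Real.log c := by
        filter_upwards [hν_ac.ae_le hrn, hν_ae] with x hx hxn
        rw [llr, hx]
        have hdval : d x = ENNReal.ofReal (Real.exp (min (ψ x) n)) / L n := by
          rw [hd]
          dsimp only
          rw [hg]
          dsimp only
          rw [if_pos hxn]
        rw [hdval, ENNReal.toReal_div, ENNReal.toReal_ofReal (Real.exp_pos _).le,
          Real.log_div (Real.exp_pos _).ne' (by rw [← hc]; exact hcpos.ne'), Real.log_exp]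
      have hllr_int : Integrable (llr νn μ) νn := by
        rw [integrable_congr hllr_eq]
        exact hmin_int.sub (integrable_const _)
      have hval : Real.log c ≤ ∫ x, ψ x ∂νn - ∫ x, llr νn μ x ∂νn := by
        rw [integral_congr_ae hllr_eq, integral_sub hmin_int (integrable_const _)]
        simp only [integral_const, measure_univ, ENNReal.toReal_one, probReal_univ, smul_eq_mul, one_mul]
        have hintle : ∫ x, min (ψ x) n ∂νn ≤ ∫ x, ψ x ∂νn :=
          integral_mono hmin_int hψν fun x => min_le_left _ _
        linarith
      have hmem : ((∫ x, ψ x ∂νn - ∫ x, llr νn μ x ∂νn : ℝ) : EReal) ∈ S :=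
        ⟨νn, hνP, hγν, hν_ac, hllr_int, hψν, rfl⟩
      calc ENNReal.log (L n) = ((Real.log c : ℝ) : EReal) := by
            rw [ENNReal.log_pos_real hLn0 hLntop]
        _ ≤ ((∫ x, ψ x ∂νn - ∫ x, llr νn μ x ∂νn : ℝ) : EReal) := by exact_mod_cast hval
        _ ≤ sSup S := le_sSup hmem
    rw [hZsup]
    have h1 : (⨆ n, L n) ≤ EReal.exp (sSup S) := by
      refine iSup_le fun n => ?_
      calc L n = EReal.exp (ENNReal.log (L n)) := (ENNReal.exp_log _).symm
        _ ≤ EReal.exp (sSup S) := EReal.exp_monotone (hlog n)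
    calc ENNReal.log (⨆ n, L n) ≤ ENNReal.log (EReal.exp (sSup S)) := ENNReal.log_monotone h1
      _ = sSup S := EReal.log_exp _
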